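/- A third-order tensor Q of size n×n×n3 over ℂ is orthogonal (Qᵀ' * Q = Q * Qᵀ' = I in the t-product sense, with conjugate tensor transpose) if and only if every frontal slice of its mode-3 DFT is a unitary n×n matrix. -/

import Mathlib

open Finset Complex
open scoped ComplexOrder

/-- The root `ζ = exp(-2πi/n)` used in the mode-3 DFT. -/
noncomputable def dftRoot (n : ℕ) : ℂ := Complex.exp (-2 * Real.pi * Complex.I / n)

/-- Mode-3 DFT of a third-order tensor: `Â(i,j,ω) = ∑ k, A(i,j,k) ζ^{ωk}`. -/
noncomputable def dft3 {n1 n2 n3 : ℕ} [NeZero n3]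
    (A : Fin n1 → Fin n2 → ZMod n3 → ℂ) (i : Fin n1) (j : Fin n2) (w : ZMod n3) : ℂ :=
  ∑ k : ZMod n3, A i j k * dftRoot n3 ^ (w * k).val

/-- t-product of third-order complex tensors via circular convolution of tubes. -/
noncomputable def tProdC {n1 n2 n4 n3 : ℕ} [NeZero n3]
    (A : Fin n1 → Fin n2 → ZMod n3 → ℂ) (B : Fin n2 → Fin n4 → ZMod n3 → ℂ) :
    Fin n1 → Fin n4 → ZMod n3 → ℂ :=
  fun i j t => ∑ k : Fin n2, ∑ s : ZMod n3, A i k s * B k j (t - s)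

/-- Conjugate tensor transpose: `Aᵀ'(i,j,k) = conj (A(j,i,-k))`. -/
noncomputable def ctT {n1 n2 n3 : ℕ} (A : Fin n1 → Fin n2 → ZMod n3 → ℂ) :
    Fin n2 → Fin n1 → ZMod n3 → ℂ :=
  fun i j k => starRingEnd ℂ (A j i (-k))

/-- The identity tensor: `I(i,i,0) = 1` and zero elsewhere. -/
noncomputable def idTC (n n3 : ℕ) : Fin n → Fin n → ZMod n3 → ℂ :=
  fun i j k => if i = j ∧ k = 0 then 1 else 0

/-- A tensor `Q` is orthogonal if `Qᵀ' * Q = Q * Qᵀ' = I` in the t-product sense. -/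
noncomputable def IsOrthT {n n3 : ℕ} [NeZero n3] (Q : Fin n → Fin n → ZMod n3 → ℂ) : Prop :=
  tProdC (ctT Q) Q = idTC n n3 ∧ tProdC Q (ctT Q) = idTC n n3

/-- The `ω`-th frontal slice of the mode-3 DFT of a tensor. -/
noncomputable def sliceDFT {n1 n2 n3 : ℕ} [NeZero n3]
    (A : Fin n1 → Fin n2 → ZMod n3 → ℂ) (w : ZMod n3) : Matrix (Fin n1) (Fin n2) ℂ :=
  Matrix.of fun i j => dft3 A i j w

/-- Squared Frobenius norm of a third-order tensor. -/
noncomputable def frob2 {n1 n2 n3 : ℕ} [NeZero n3]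
    (A : Fin n1 → Fin n2 → ZMod n3 → ℂ) : ℝ :=
  ∑ i : Fin n1, ∑ j : Fin n2, ∑ k : ZMod n3, ‖A i j k‖ ^ 2

/-- Nuclear norm of a matrix: sum of singular values, i.e. `Re (trace √(Mᴴ M))`. -/
noncomputable def nuclearNorm {m n : Type*} [Fintype m] [Fintype n] [DecidableEq n]
    (M : Matrix m n ℂ) : ℝ :=
  (((Matrix.posSemidef_conjTranspose_mul_self M).1.eigenvectorUnitary : Matrix n n ℂ) *
    Matrix.diagonal (((↑) : ℝ → ℂ) ∘ Real.sqrt ∘ (Matrix.posSemidef_conjTranspose_mul_self M).1.eigenvalues) *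
    (star (Matrix.posSemidef_conjTranspose_mul_self M).1.eigenvectorUnitary : Matrix n n ℂ)).trace.re
section Aux

variable {n3 : ℕ} [NeZero n3]

lemma dftRoot_pow_self : dftRoot n3 ^ n3 = 1 := by
  unfold dftRoot
  rw [← Complex.exp_nat_mul]
  have hn : (n3 : ℂ) ≠ 0 := Nat.cast_ne_zero.mpr (NeZero.ne n3)
  rw [mul_div_assoc']
  rw [mul_comm (n3:ℂ), mul_div_assoc, div_self hn, mul_one]
  have : (-2 : ℂ) * Real.pi * Complex.I = -(2 * Real.pi * Complex.I) := by ring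
  rw [this, Complex.exp_neg, Complex.exp_two_pi_mul_I, inv_one]

lemma dftRoot_prim : IsPrimitiveRoot (dftRoot n3) n3 := by
  have h := Complex.isPrimitiveRoot_exp n3 (NeZero.ne n3)
  have he : dftRoot n3 = (Complex.exp (2 * Real.pi * Complex.I / n3))⁻¹ := by
    rw [← Complex.exp_neg]
    unfold dftRoot
    ring_nf
  rw [he]
  exact h.inv

lemma dftRoot_pow_mod (m : ℕ) : dftRoot n3 ^ (m % n3) = dftRoot n3 ^ m := by
  conv_rhs => rw [← Nat.mod_add_div m n3]
  rw [pow_add, pow_mul, dftRoot_pow_self, one_pow, mul_one]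

/-- The character `F a = ζ^{a.val}`. -/
noncomputable def Fch (n3 : ℕ) [NeZero n3] (a : ZMod n3) : ℂ := dftRoot n3 ^ a.val

lemma Fch_zero : Fch n3 0 = 1 := by simp [Fch]

lemma Fch_add (a b : ZMod n3) : Fch n3 (a + b) = Fch n3 a * Fch n3 b := by
  unfold Fch
  rw [ZMod.val_add, dftRoot_pow_mod, pow_add]

lemma Fch_nsmul (m : ℕ) (a : ZMod n3) : Fch n3 (m • a) = Fch n3 a ^ m := by
  induction m with
  | zero => simp [Fch_zero]
  | succ k ih => rw [succ_nsmul, Fch_add, ih, pow_succ]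

lemma Fch_mul (w c : ZMod n3) : Fch n3 (w * c) = Fch n3 c ^ w.val := by
  rw [← Fch_nsmul]
  congr 1
  rw [nsmul_eq_mul, ZMod.natCast_val, ZMod.cast_id]

lemma Fch_ne_zero (a : ZMod n3) : Fch n3 a ≠ 0 := by
  unfold Fch dftRoot
  exact pow_ne_zero _ (Complex.exp_ne_zero _)

lemma Fch_neg (a : ZMod n3) : Fch n3 (-a) = (Fch n3 a)⁻¹ := by
  have h : Fch n3 a * Fch n3 (-a) = 1 := by
    rw [← Fch_add, add_neg_cancel, Fch_zero]
  exact eq_inv_of_mul_eq_one_right h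

lemma Fch_conj (a : ZMod n3) : (starRingEnd ℂ) (Fch n3 a) = Fch n3 (-a) := by
  rw [Fch_neg]
  unfold Fch dftRoot
  rw [map_pow, ← inv_pow]
  congr 1
  rw [← Complex.exp_conj, ← Complex.exp_neg]
  congr 1
  simp only [map_div₀, map_mul, map_neg, Complex.conj_I, Complex.conj_ofNat,
    Complex.conj_ofReal, map_natCast, map_ofNat]
  ring

lemma sum_val_eq (g : ℕ → ℂ) :
    ∑ w : ZMod n3, g w.val = ∑ i ∈ Finset.range n3, g i := by
  rw [← Fin.sum_univ_eq_sum_range]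
  apply Fintype.sum_bijective (fun w : ZMod n3 => (⟨w.val, ZMod.val_lt w⟩ : Fin n3))
  · constructor
    · intro a b hab
      exact ZMod.val_injective n3 (by simpa using congrArg Fin.val hab)
    · intro i
      exact ⟨(i : ZMod n3), by simp [ZMod.val_natCast_of_lt i.isLt]⟩
  · intro w; rfl

lemma sum_Fch (c : ZMod n3) :
    ∑ w : ZMod n3, Fch n3 (w * c) = if c = 0 then (n3 : ℂ) else 0 := by
  have h1 : ∑ w : ZMod n3, Fch n3 (w * c) = ∑ i ∈ Finset.range n3, Fch n3 c ^ i := by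
    simp_rw [Fch_mul]
    exact sum_val_eq _
  rw [h1]
  by_cases hc : c = 0
  · simp [hc, Fch_zero]
  · rw [if_neg hc]
    have hx1 : Fch n3 c ≠ 1 := by
      unfold Fch
      refine dftRoot_prim.pow_ne_one_of_pos_of_lt ?_ (ZMod.val_lt c)
      exact fun h => hc ((ZMod.val_eq_zero c).mp h)
    have hxn : Fch n3 c ^ n3 = 1 := by
      unfold Fch
      rw [← pow_mul, mul_comm, pow_mul, dftRoot_pow_self, one_pow]
    rw [geom_sum_eq hx1, hxn, sub_self, zero_div]

lemma dft3_def' {n1 n2 : ℕ} (A : Fin n1 → Fin n2 → ZMod n3 → ℂ)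
    (i : Fin n1) (j : Fin n2) (w : ZMod n3) :
    dft3 A i j w = ∑ k : ZMod n3, A i j k * Fch n3 (w * k) := rfl

lemma sliceDFT_tProd {n1 n2 n4 : ℕ} (A : Fin n1 → Fin n2 → ZMod n3 → ℂ)
    (B : Fin n2 → Fin n4 → ZMod n3 → ℂ) (w : ZMod n3) :
    sliceDFT (tProdC A B) w = sliceDFT A w * sliceDFT B w := by
  ext i j
  rw [Matrix.mul_apply]
  show dft3 (tProdC A B) i j w = ∑ k, dft3 A i k w * dft3 B k j w
  simp_rw [dft3_def', tProdC, Finset.sum_mul, Finset.mul_sum]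
  rw [Finset.sum_comm]
  refine Finset.sum_congr rfl fun k _ => ?_
  rw [Finset.sum_comm]
  refine Finset.sum_congr rfl fun s _ => ?_
  refine Fintype.sum_equiv (Equiv.subRight s) _ _ fun t => ?_
  simp only [Equiv.subRight_apply]
  have e2 : Fch n3 (w * t) = Fch n3 (w * s) * Fch n3 (w * (t - s)) := by
    rw [← Fch_add]
    congr 1
    ring
  rw [e2]
  ring

lemma sliceDFT_ctT {n1 n2 : ℕ} (A : Fin n1 → Fin n2 → ZMod n3 → ℂ) (w : ZMod n3) :
    sliceDFT (ctT A) w = (sliceDFT A w).conjTranspose := by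
  ext i j
  show dft3 (ctT A) i j w = (starRingEnd ℂ) (dft3 A j i w)
  simp_rw [dft3_def', ctT, map_sum, map_mul, Fch_conj]
  refine Fintype.sum_equiv (Equiv.neg (ZMod n3)) _ _ fun k => ?_
  simp only [Equiv.neg_apply, neg_neg]
  congr 2
  ring

lemma sliceDFT_id {n : ℕ} [DecidableEq (Fin n)] (w : ZMod n3) :
    sliceDFT (idTC n n3) w = (1 : Matrix (Fin n) (Fin n) ℂ) := by
  ext i j
  show dft3 (idTC n n3) i j w = _
  simp_rw [dft3_def', idTC]
  rw [Matrix.one_apply]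
  by_cases hij : i = j
  · simp [hij, Fch_mul, Fch_zero, Finset.sum_ite_eq, Finset.sum_ite_eq']
  · simp [hij]

lemma dft3_inj {n1 n2 : ℕ} (A B : Fin n1 → Fin n2 → ZMod n3 → ℂ)
    (h : ∀ w, sliceDFT A w = sliceDFT B w) : A = B := by
  have key : ∀ (C : Fin n1 → Fin n2 → ZMod n3 → ℂ) (i j) (k0 : ZMod n3),
      ∑ w : ZMod n3, dft3 C i j w * Fch n3 (-(w * k0)) = (n3 : ℂ) * C i j k0 := by
    intro C i j k0
    simp_rw [dft3_def', Finset.sum_mul]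
    rw [Finset.sum_comm]
    have : ∀ k : ZMod n3, ∑ w : ZMod n3, C i j k * Fch n3 (w * k) * Fch n3 (-(w * k0))
        = C i j k * (if k - k0 = 0 then (n3 : ℂ) else 0) := by
      intro k
      rw [← sum_Fch (k - k0), Finset.mul_sum]
      refine Finset.sum_congr rfl fun v _ => ?_
      rw [mul_assoc, ← Fch_add]
      congr 2
      ring
    simp_rw [this]
    simp_rw [sub_eq_zero, mul_ite, mul_zero]
    rw [Finset.sum_ite_eq' Finset.univ k0]
    simp [mul_comm]
  funext i j k0
  have hA := key A i j k0
  have hB := key B i j k0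
  have hs : ∀ w, dft3 A i j w = dft3 B i j w := by
    intro w
    have := h w
    exact congrFun (congrFun (congrArg (fun M => (M : Fin n1 → Fin n2 → ℂ)) this) i) j
  rw [funext hs] at hA
  have hn : (n3 : ℂ) ≠ 0 := Nat.cast_ne_zero.mpr (NeZero.ne n3)
  have := hA.symm.trans hB
  exact mul_left_cancel₀ hn this

end Aux

/-- A tensor is orthogonal (w.r.t. the t-product and conjugate tensor transpose) iff
every frontal slice of its mode-3 DFT is a unitary matrix. -/
theorem isOrthT_iff_unitary {n n3 : ℕ} [NeZero n3] [DecidableEq (Fin n)]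
    (Q : Fin n → Fin n → ZMod n3 → ℂ) :
    IsOrthT Q ↔ ∀ w : ZMod n3, sliceDFT Q w ∈ Matrix.unitaryGroup (Fin n) ℂ := by
  constructor
  · rintro ⟨h1, h2⟩ w
    rw [Matrix.mem_unitaryGroup_iff]
    have := congrArg (fun A => sliceDFT A w) h2
    rw [Matrix.star_eq_conjTranspose]
    simp only [sliceDFT_tProd, sliceDFT_ctT, sliceDFT_id] at this
    exact this
  · intro hu
    constructor
    · apply dft3_inj
      intro w
      rw [sliceDFT_tProd, sliceDFT_ctT, sliceDFT_id]
      have := Matrix.mem_unitaryGroup_iff'.mp (hu w)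
      rwa [Matrix.star_eq_conjTranspose] at this
    · apply dft3_inj
      intro w
      rw [sliceDFT_tProd, sliceDFT_ctT, sliceDFT_id]
      have := Matrix.mem_unitaryGroup_iff.mp (hu w)
      rwa [Matrix.star_eq_conjTranspose] at this
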